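/- Under the standing assumptions (p an odd prime, v ∈ 𝔽_2^p a nonzero small vector with v_0 = 0 that works together with ê, A = {i ∈ ℤ/pℤ : v_i = 1}, A_0 = A ∪ {0}, and k the girth of v): (1) k is even; and (2) 0 ∉ (k−2)A_0 + A, and consequently |(k−2)A_0 + A| ≤ p − 1, where (k−2)A_0 denotes the (k−2)-fold sumset A_0 + ⋯ + A_0 in ℤ/pℤ. -/
import Mathlib


/-- The cyclic shift operator on `𝔽₂ⁿ` (indexed by `ZMod n`): `(cshift x) i = x (i - 1)`. -/
def cshift {n : ℕ} (x : ZMod n → ZMod 2) : ZMod n → ZMod 2 := fun i => x (i - 1)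

/-- The standard dot product over `𝔽₂`. -/
def dot {n : ℕ} [NeZero n] (v x : ZMod n → ZMod 2) : ZMod 2 := ∑ i, v i * x i

/-- A vector `v ∈ 𝔽₂ⁿ` works if for every `x` some cyclic shift of `x` is orthogonal to `v`. -/
def Works {n : ℕ} [NeZero n] (v : ZMod n → ZMod 2) : Prop :=
  ∀ x : ZMod n → ZMod 2, ∃ k : ℕ, dot v (cshift^[k] x) = 0

/-- Two vectors `v, w ∈ 𝔽₂ⁿ` work together if for every `x` there is a single cyclic shift
of `x` orthogonal to both. -/
def WorkTogether2 {n : ℕ} [NeZero n] (v w : ZMod n → ZMod 2) : Prop :=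
  ∀ x : ZMod n → ZMod 2, ∃ k : ℕ,
    dot v (cshift^[k] x) = 0 ∧ dot w (cshift^[k] x) = 0

/-- The vector `ê ∈ 𝔽₂ⁿ` with `ê 0 = 0` and `ê i = 1` for `i ≠ 0`. -/
def ehat (n : ℕ) : ZMod n → ZMod 2 := fun i => if i = 0 then 0 else 1

/-- A vector `v ∈ 𝔽₂ᵖ` is small if there is no `i` with `v i = v (-i) = 1`. -/
def IsSmall {n : ℕ} (v : ZMod n → ZMod 2) : Prop :=
  ¬ ∃ i : ZMod n, v i = 1 ∧ v (-i) = 1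

/-- The set `A = {i : v i = 1}` associated to a vector `v`. -/
def Asupp {n : ℕ} [NeZero n] (v : ZMod n → ZMod 2) : Finset (ZMod n) :=
  Finset.univ.filter fun i => v i = 1

/-- The girth of `v`: the least `m ≥ 1` such that `0` is a sum of `m` elements of
`A = {i : v i = 1}`; equivalently, the length of the shortest directed cycle in the Cayley
digraph `G_v` on `ℤ/nℤ` with an arc from `i` to `i + j` whenever `v j = 1`. -/
noncomputable def girth {n : ℕ} [NeZero n] (v : ZMod n → ZMod 2) : ℕ :=
  sInf {m : ℕ | 0 < m ∧ ∃ f : Fin m → ZMod n, (∀ t, f t ∈ Asupp v) ∧ ∑ t, f t = 0}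

open Pointwise in
/-- The `m`-fold iterated sumset `A + ⋯ + A` in `ℤ/nℤ` (with `0`-fold sumset `{0}`). -/
def iterSumset {n : ℕ} (A : Finset (ZMod n)) : ℕ → Finset (ZMod n)
  | 0 => {0}
  | m + 1 => iterSumset A m + A

/- ------------------ auxiliary lemmas ------------------ -/

lemma zmod_two_cases (a : ZMod 2) : a = 0 ∨ a = 1 := by revert a; decide

lemma zmod_two_add_self (a : ZMod 2) : a + a = 0 := by revert a; decide

lemma zmod_two_neg (a : ZMod 2) : -a = a := by revert a; decide

lemma cshift_iterate {n : ℕ} (x : ZMod n → ZMod 2) (m : ℕ) (i : ZMod n) :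
    (cshift^[m] x) i = x (i - (m : ZMod n)) := by
  induction m generalizing i with
  | zero => simp
  | succ m ih =>
    rw [Function.iterate_succ_apply']
    show (cshift^[m] x) (i - 1) = _
    rw [ih]
    congr 1
    push_cast
    ring

open Pointwise in
/-- Standing assumptions: `p` an odd prime, `v ∈ 𝔽₂ᵖ` a nonzero small vector with `v 0 = 0`
working together with `ê`, `A = {i : v i = 1}`, `A₀ = A ∪ {0}` and `k` the girth of `v`.
Then (1) `k` is even, and (2) `0 ∉ (k−2)A₀ + A`, and consequently
`|(k−2)A₀ + A| ≤ p − 1`. -/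
theorem girth_even_and_sumset_bound (p : ℕ) [NeZero p] (hp : p.Prime) (hodd : Odd p)
    (v : ZMod p → ZMod 2) (hv : v ≠ 0) (hsmall : IsSmall v) (h0 : v 0 = 0)
    (hwork : WorkTogether2 v (ehat p)) :
    Even (girth v) ∧
    (0 : ZMod p) ∉ iterSumset (insert 0 (Asupp v)) (girth v - 2) + Asupp v ∧
    (iterSumset (insert 0 (Asupp v)) (girth v - 2) + Asupp v).card ≤ p - 1 := by
  classical
  have hmemA : ∀ i : ZMod p, i ∈ Asupp v ↔ v i = 1 := by
    intro i; simp [Asupp]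
  have h0A : (0 : ZMod p) ∉ Asupp v := by
    rw [hmemA, h0]; exact zero_ne_one
  obtain ⟨a0, ha0⟩ : ∃ i, i ∈ Asupp v := by
    by_contra hc
    push_neg at hc
    apply hv
    funext i
    rcases zmod_two_cases (v i) with h | h
    · exact h
    · exact absurd ((hmemA i).mpr h) (hc i)
  have hSne : {m : ℕ | 0 < m ∧ ∃ f : Fin m → ZMod p,
      (∀ t, f t ∈ Asupp v) ∧ ∑ t, f t = 0}.Nonempty := by
    refine ⟨p, Nat.pos_of_ne_zero (NeZero.ne p), fun _ => a0, fun _ => ha0, ?_⟩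
    have : ∑ _t : Fin p, a0 = (p : ZMod p) * a0 := by
      simp [Finset.sum_const, nsmul_eq_mul]
    rw [this, ZMod.natCast_self, zero_mul]
  have hk_mem : 0 < girth v ∧ ∃ f : Fin (girth v) → ZMod p,
      (∀ t, f t ∈ Asupp v) ∧ ∑ t, f t = 0 := Nat.sInf_mem hSne
  have hmin : ∀ m : ℕ, 0 < m → ∀ g : Fin m → ZMod p,
      (∀ t, g t ∈ Asupp v) → (∑ t, g t) = 0 → girth v ≤ m :=
    fun m hm g hg hs => Nat.sInf_le ⟨hm, g, hg, hs⟩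
  set k := girth v with hk_def
  obtain ⟨hkpos, f, hfA, hfsum⟩ := hk_mem
  -- the step sequence, extended periodically
  set f' : ℕ → ZMod p := fun i => f ⟨i % k, Nat.mod_lt i hkpos⟩ with hf'_def
  have hf'A : ∀ i, f' i ∈ Asupp v := fun i => hfA _
  have hper : ∀ i, f' (i + k) = f' i := by
    intro i; simp [hf'_def, Nat.add_mod_right]
  have hsumk : ∑ i ∈ Finset.range k, f' i = 0 := by
    rw [← Fin.sum_univ_eq_sum_range, ← hfsum]
    refine Finset.sum_congr rfl fun t _ => ?_
    simp [hf'_def, Nat.mod_eq_of_lt t.isLt]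
  -- partial sums
  set s : ℕ → ZMod p := fun t => ∑ i ∈ Finset.range t, f' i with hs_def
  have hs_split : ∀ t u : ℕ, t ≤ u → s t + ∑ i ∈ Finset.Ico t u, f' i = s u := by
    intro t u h
    simp only [hs_def, Finset.range_eq_Ico]
    exact Finset.sum_Ico_consecutive _ (Nat.zero_le t) h
  have hL : ∀ t u : ℕ, t < u → s t = s u → k ≤ u - t := by
    intro t u htu hs0
    have h1 := hs_split t u (le_of_lt htu)
    rw [← hs0] at h1
    have h2 : ∑ i ∈ Finset.Ico t u, f' i = 0 := by
      have := h1
      rwa [add_eq_left] at this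
    have h3 : ∑ j : Fin (u - t), f' (t + (j : ℕ)) = 0 := by
      rw [Fin.sum_univ_eq_sum_range (fun i => f' (t + i)) (u - t),
        ← Finset.sum_Ico_eq_sum_range]
      exact h2
    exact hmin (u - t) (by omega) _ (fun j => hf'A _) h3
  have hs_inj : ∀ t u, t < k → u < k → s t = s u → t = u := by
    intro t u ht hu h
    rcases lt_trichotomy t u with h1 | h1 | h1
    · have := hL t u h1 h; omega
    · exact h1
    · have := hL u t h1 h.symm; omega
  have hwindow : ∀ t, ∑ i ∈ Finset.range k, f' (t + i) = 0 := by
    intro t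
    induction t with
    | zero => simpa using hsumk
    | succ t ih =>
      have h1 := Finset.sum_range_succ (fun i => f' (t + i)) k
      have h2 := Finset.sum_range_succ' (fun i => f' (t + i)) k
      have h3 : f' (t + k) = f' (t + 0) := by rw [Nat.add_zero]; exact hper t
      have h4 : ∑ i ∈ Finset.range k, f' (t + 1 + i)
          = ∑ i ∈ Finset.range k, f' (t + (i + 1)) := by
        refine Finset.sum_congr rfl fun i _ => ?_
        congr 1; omega
      have h5 : ∑ i ∈ Finset.range k, f' (t + (i + 1)) + f' (t + 0)
          = ∑ i ∈ Finset.range k, f' (t + i) + f' (t + k) := by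
        rw [← h1, ← h2]
      rw [h4]
      have h6 : ∑ i ∈ Finset.range k, f' (t + (i + 1)) + f' (t + 0)
          = 0 + f' (t + 0) := by rw [h5, ih, h3]
      exact add_right_cancel h6
  have hsk : ∀ t, s (t + k) = s t := by
    intro t
    have h1 := hs_split t (t + k) (Nat.le_add_right t k)
    rw [Finset.sum_Ico_eq_sum_range] at h1
    simp only [Nat.add_sub_cancel_left] at h1
    rw [hwindow t, add_zero] at h1
    exact h1.symm
  have hst_succ : ∀ t, s (t + 1) = s t + f' t := by
    intro t
    simp only [hs_def]
    exact Finset.sum_range_succ f' t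
  -- uniqueness of edges inside the cycle
  have hB : ∀ t u a, t < k → u < k → a ∈ Asupp v → s u = s t + a → a = f' t := by
    intro t u a ht hu haA hsu
    have ha0 : a ≠ 0 := fun h => h0A (h ▸ haA)
    by_cases hut : u = t
    · exfalso
      apply ha0
      rw [hut] at hsu
      exact (left_eq_add.mp hsu)
    · have hdef : ∃ u' : ℕ, t < u' ∧ u' < t + k ∧ s u' = s t + a := by
        rcases Nat.lt_or_ge t u with h | h
        · exact ⟨u, h, by omega, hsu⟩
        · refine ⟨u + k, by omega, by omega, ?_⟩
          rw [hsk u]; exact hsu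
      obtain ⟨u', hu'1, hu'2, hsu'⟩ := hdef
      have hIcosum : ∑ i ∈ Finset.Ico u' (t + k), f' i = s (t + k) - s u' :=
        eq_sub_of_add_eq' (hs_split u' (t + k) (le_of_lt hu'2))
      have hval : s (t + k) - s u' = -a := by
        rw [hsk t, hsu']; ring
      set m := t + k - u' with hm
      set g : Fin (m + 1) → ZMod p := Fin.cons a (fun j : Fin m => f' (u' + (j : ℕ)))
        with hg
      have hgA : ∀ j, g j ∈ Asupp v := by
        intro j
        refine Fin.cases ?_ ?_ j
        · simpa [hg] using haA
        · intro i; simpa [hg] using hf'A (u' + (i : ℕ))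
      have hgsum : ∑ j, g j = 0 := by
        rw [hg, Fin.sum_cons]
        have h7 : ∑ j : Fin m, f' (u' + (j : ℕ))
            = ∑ i ∈ Finset.Ico u' (t + k), f' i := by
          rw [Fin.sum_univ_eq_sum_range (fun i => f' (u' + i)) m,
            ← Finset.sum_Ico_eq_sum_range]
        rw [h7, hIcosum, hval]
        ring
      have hk_le := hmin (m + 1) (Nat.succ_pos m) g hgA hgsum
      have hu'eq : u' = t + 1 := by omega
      rw [hu'eq, hst_succ t] at hsu'
      exact (add_left_cancel hsu').symm
  -- dot product computations
  have hdot_ehat : ∀ z : ZMod p → ZMod 2, dot (ehat p) z = (∑ i, z i) + z 0 := by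
    intro z
    have h1 : ∑ i ∈ (Finset.univ.erase (0 : ZMod p)), z i + z 0 = ∑ i, z i :=
      Finset.sum_erase_add _ _ (Finset.mem_univ 0)
    have h2 : dot (ehat p) z = ∑ i ∈ Finset.univ.erase (0 : ZMod p), z i := by
      rw [dot, ← Finset.sum_erase_add _ _ (Finset.mem_univ (0 : ZMod p))]
      have he0 : ehat p 0 = 0 := by simp [ehat]
      rw [he0, zero_mul, add_zero]
      refine Finset.sum_congr rfl fun i hi => ?_
      have : ehat p i = 1 := by simp [ehat, (Finset.mem_erase.mp hi).1]
      rw [this, one_mul]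
    rw [h2, ← h1, add_assoc, zmod_two_add_self, add_zero]
  have hdot_v : ∀ z : ZMod p → ZMod 2, dot v z = ∑ i ∈ Asupp v, z i := by
    intro z
    rw [dot]
    have h1 : ∀ i, v i * z i = if i ∈ Asupp v then z i else 0 := by
      intro i
      rcases zmod_two_cases (v i) with h | h
      · rw [h, zero_mul, if_neg]
        rw [hmemA, h]; exact zero_ne_one
      · rw [h, one_mul, if_pos ((hmemA i).mpr h)]
    simp_rw [h1]
    rw [Finset.sum_ite_mem, Finset.univ_inter]
  -- evenness
  have heven : Even k := by
    rcases Nat.even_or_odd k with he | ho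
    · exact he
    exfalso
    have hkodd : k % 2 = 1 := Nat.odd_iff.mp ho
    set C : Finset (ZMod p) := (Finset.range k).image s with hC_def
    have hCcard : C.card = k := by
      rw [hC_def, Finset.card_image_of_injOn, Finset.card_range]
      intro t ht u hu h
      exact hs_inj t u (Finset.mem_range.mp (Finset.mem_coe.mp ht))
        (Finset.mem_range.mp (Finset.mem_coe.mp hu)) h
    set x : ZMod p → ZMod 2 := fun j => if j ∈ C then 1 else 0 with hx_def
    have hxsum : ∑ i, x i = (k : ZMod 2) := by
      have h1 : ∑ i, x i = ∑ i ∈ Finset.univ ∩ C, (1 : ZMod 2) := by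
        rw [← Finset.sum_ite_mem]
      rw [h1, Finset.univ_inter, Finset.sum_const, hCcard, nsmul_eq_mul, mul_one]
    obtain ⟨m, hvm, hem⟩ := hwork x
    have hsh : ∀ i, (cshift^[m] x) i = x (i - (m : ZMod p)) := cshift_iterate x m
    rw [hdot_ehat] at hem
    have hsum_shift : ∑ i, (cshift^[m] x) i = ∑ i, x i := by
      simp only [hsh]
      exact Fintype.sum_equiv (Equiv.subRight ((m : ZMod p))) _ _ (fun i => rfl)
    rw [hsum_shift, hsh 0, hxsum] at hem
    have hx0 : x (-(m : ZMod p)) = (k : ZMod 2) := by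
      have h1 : (0 : ZMod p) - (m : ZMod p) = -(m : ZMod p) := zero_sub _
      rw [h1] at hem
      have h2 := eq_neg_of_add_eq_zero_right hem
      rwa [zmod_two_neg] at h2
    have hk2 : (k : ZMod 2) = 1 := by
      have h1 : ((k % 2 : ℕ) : ZMod 2) = (k : ZMod 2) := ZMod.natCast_mod k 2
      rw [← h1, hkodd, Nat.cast_one]
    have hmC : -(m : ZMod p) ∈ C := by
      by_contra hc
      rw [hx_def] at hx0
      simp only at hx0
      rw [if_neg hc, hk2] at hx0
      exact zero_ne_one hx0
    obtain ⟨t, ht, hst⟩ := Finset.mem_image.mp (hC_def ▸ hmC)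
    have htk : t < k := Finset.mem_range.mp ht
    rw [hdot_v] at hvm
    have harg : ∀ i : ZMod p, i - (m : ZMod p) = i + s t := by
      intro i; rw [sub_eq_add_neg, ← hst]
    have hvm' : ∑ i ∈ Asupp v, x (i + s t) = 0 := by
      rw [← hvm]
      refine Finset.sum_congr rfl fun i _ => ?_
      rw [hsh i, harg i]
    have hfilter : (Asupp v).filter (fun a => a + s t ∈ C) = {f' t} := by
      ext a
      simp only [Finset.mem_filter, Finset.mem_singleton]
      constructor
      · rintro ⟨haA, hmem⟩
        obtain ⟨u, hu, hsu⟩ := Finset.mem_image.mp (hC_def ▸ hmem)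
        exact hB t u a htk (Finset.mem_range.mp hu) haA (by rw [hsu, add_comm])
      · rintro rfl
        refine ⟨hf'A t, ?_⟩
        have h1 : f' t + s t = s (t + 1) := by rw [hst_succ, add_comm]
        rw [h1]
        by_cases hlt : t + 1 < k
        · exact Finset.mem_image.mpr ⟨t + 1, Finset.mem_range.mpr hlt, rfl⟩
        · have h2 : t + 1 = k := by omega
          have h3 : s (t + 1) = s 0 := by
            rw [h2]
            simp only [hs_def]
            rw [hsumk]
            simp
          rw [h3]
          exact Finset.mem_image.mpr ⟨0, Finset.mem_range.mpr hkpos, rfl⟩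
    have hcount : ∑ i ∈ Asupp v, x (i + s t)
        = (((Asupp v).filter (fun a => a + s t ∈ C)).card : ZMod 2) := by
      calc ∑ i ∈ Asupp v, x (i + s t)
          = ∑ i ∈ Asupp v, if (i + s t) ∈ C then (1 : ZMod 2) else 0 := rfl
        _ = (((Asupp v).filter (fun a => a + s t ∈ C)).card : ZMod 2) :=
          Finset.sum_boole _ _
    rw [hcount, hfilter] at hvm'
    simp at hvm'
  have hk2' : 2 ≤ k := by
    rcases heven with ⟨r, hr⟩; omega
  have hnotmem : (0 : ZMod p) ∉ iterSumset (insert 0 (Asupp v)) (k - 2) + Asupp v := by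
    have hrep : ∀ (mm : ℕ) (y : ZMod p), y ∈ iterSumset (insert 0 (Asupp v)) mm →
        ∃ j, j ≤ mm ∧ ∃ g : Fin j → ZMod p, (∀ t, g t ∈ Asupp v) ∧ ∑ t, g t = y := by
      intro mm
      induction mm with
      | zero =>
        intro y hy
        simp only [iterSumset, Finset.mem_singleton] at hy
        exact ⟨0, le_refl 0, fun t => t.elim0, fun t => t.elim0, by simp [hy]⟩
      | succ mm ih =>
        intro y hy
        rw [iterSumset] at hy
        obtain ⟨b, hb, c, hc, hbc⟩ := Finset.mem_add.mp hy
        obtain ⟨j, hj, g, hgA, hgs⟩ := ih b hb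
        rcases Finset.mem_insert.mp hc with rfl | hcA
        · exact ⟨j, le_trans hj (Nat.le_succ mm), g, hgA, by rw [hgs, ← hbc, add_zero]⟩
        · refine ⟨j + 1, Nat.succ_le_succ hj, Fin.cons c g, ?_, ?_⟩
          · intro t
            refine Fin.cases ?_ ?_ t
            · simpa using hcA
            · intro i; simpa using hgA i
          · rw [Fin.sum_cons, hgs, ← hbc, add_comm]
    intro hmem
    obtain ⟨b, hb, c, hc, hbc⟩ := Finset.mem_add.mp hmem
    obtain ⟨j, hj, g, hgA, hgs⟩ := hrep _ b hb
    have hk_le := hmin (j + 1) (Nat.succ_pos j) (Fin.cons c g)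
      (by
        intro t
        refine Fin.cases ?_ ?_ t
        · simpa using hc
        · intro i; simpa using hgA i)
      (by rw [Fin.sum_cons, hgs, add_comm]; exact hbc)
    omega
  refine ⟨heven, hnotmem, ?_⟩
  · -- cardinality bound
    have hsub : iterSumset (insert 0 (Asupp v)) (k - 2) + Asupp v ⊆
        Finset.univ.erase (0 : ZMod p) := by
      intro z hz
      exact Finset.mem_erase.mpr ⟨fun h => hnotmem (h ▸ hz), Finset.mem_univ z⟩
    calc (iterSumset (insert 0 (Asupp v)) (k - 2) + Asupp v).card
        ≤ (Finset.univ.erase (0 : ZMod p)).card := Finset.card_le_card hsub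
      _ = p - 1 := by
          rw [Finset.card_erase_of_mem (Finset.mem_univ _), Finset.card_univ, ZMod.card]
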